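/- The function Q* is a valid CDF of a distribution on [0, B]: Q* is nondecreasing on [0, B], takes values in [0, 1], satisfies Q*(B) = 1, and lim_{r → L⁺} Q*(r) = (1 − L/B)/log(B/L) = Q*(L) (so Q* is continuous on (0, B]). -/

import Mathlib

open Real Set Filter Topology

/-- `Q*` is a valid CDF of a distribution on `[0, B]`: it is nondecreasing on `[0, B]`,
takes values in `[0, 1]` there, satisfies `Q*(B) = 1`, its right limit at `L` equals
`(1 - L/B)/log(B/L) = Q*(L)`, and `Q*` is continuous on `(0, B]`. -/
theorem Qstar_is_valid_cdf (B μ L : ℝ)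
    (hB : 0 < B) (hμ0 : 0 < μ) (hμB : μ < B)
    (hL : L ∈ Set.Ioo (0 : ℝ) B) (hLμ : L * (1 + Real.log (B / L)) = μ)
    (Qs : ℝ → ℝ)
    (hQs : ∀ r, Qs r =
      if r ≤ L then (1 - L / B) / Real.log (B / L)
      else (1 - L / B) * (r / (r - L)) * (Real.log (r / L) / Real.log (B / L))) :
    MonotoneOn Qs (Set.Icc 0 B) ∧
    (∀ r ∈ Set.Icc (0 : ℝ) B, Qs r ∈ Set.Icc (0 : ℝ) 1) ∧
    Qs B = 1 ∧
    Filter.Tendsto Qs (nhdsWithin L (Set.Ioi L))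
      (nhds ((1 - L / B) / Real.log (B / L))) ∧
    Qs L = (1 - L / B) / Real.log (B / L) ∧
    ContinuousOn Qs (Set.Ioc 0 B) := by
  obtain ⟨hL0, hLB⟩ := hL
  have hBL1 : 1 < B / L := (one_lt_div hL0).2 hLB
  have hlog : 0 < Real.log (B / L) := Real.log_pos hBL1
  set c := (1 - L / B) / Real.log (B / L) with hc
  have hLBc : 0 < 1 - L / B := by
    have : L / B < 1 := (div_lt_one hB).2 hLB
    linarith
  have hc0 : 0 < c := div_pos hLBc hlog
  set φ : ℝ → ℝ := fun r => r * (Real.log r - Real.log L) / (r - L) with hφ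
  -- Qs equals c * φ on (L, ∞)
  have hQφ : ∀ r, L < r → Qs r = c * φ r := by
    intro r hr
    have hr0 : 0 < r := hL0.trans hr
    have hlogr : Real.log (r / L) = Real.log r - Real.log L :=
      Real.log_div hr0.ne' hL0.ne'
    rw [hQs, if_neg (not_le.2 hr), hlogr, hc, hφ]
    ring
  -- derivative of φ
  have hφderiv : ∀ r ∈ Set.Ioi L, HasDerivAt φ
      ((r - L - L * (Real.log r - Real.log L)) / (r - L) ^ 2) r := by
    intro r hr
    have hr0 : 0 < r := hL0.trans hr
    have hrl : r - L ≠ 0 := sub_ne_zero.2 (ne_of_gt hr)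
    have h1 : HasDerivAt (fun r : ℝ => r * (Real.log r - Real.log L))
        (1 * (Real.log r - Real.log L) + r * r⁻¹) r :=
      (hasDerivAt_id r).mul ((Real.hasDerivAt_log hr0.ne').sub_const _)
    have h2 : HasDerivAt (fun r : ℝ => r - L) 1 r := (hasDerivAt_id r).sub_const L
    have h3 := h1.div h2 hrl
    convert h3 using 1
    · rfl
    · rfl
    · rfl
    field_simp
    ring
  have hφmono : MonotoneOn φ (Set.Ioi L) := by
    apply monotoneOn_of_deriv_nonneg (convex_Ioi L)
    · exact fun x hx => ((hφderiv x hx).continuousAt).continuousWithinAt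
    · rw [interior_Ioi]
      exact fun x hx => ((hφderiv x hx).differentiableAt).differentiableWithinAt
    · rw [interior_Ioi]
      intro x hx
      rw [(hφderiv x hx).deriv]
      have hx0 : 0 < x := hL0.trans hx
      have hxl : 0 < x - L := sub_pos.2 hx
      apply div_nonneg _ (by positivity)
      have h := Real.log_le_sub_one_of_pos (div_pos hx0 hL0)
      rw [Real.log_div hx0.ne' hL0.ne'] at h
      have h2 : L * (Real.log x - Real.log L) ≤ L * (x / L - 1) :=
        mul_le_mul_of_nonneg_left h hL0.le
      have h3 : L * (x / L - 1) = x - L := by field_simp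
      linarith
  have hφ1 : ∀ r, L < r → 1 ≤ φ r := by
    intro r hr
    have hr0 : 0 < r := hL0.trans hr
    have hrl : 0 < r - L := sub_pos.2 hr
    rw [hφ]
    rw [le_div_iff₀ hrl, one_mul]
    have h := Real.log_le_sub_one_of_pos (div_pos hL0 hr0)
    rw [Real.log_div hL0.ne' hr0.ne'] at h
    have h2 : r * (Real.log L - Real.log r) ≤ r * (L / r - 1) :=
      mul_le_mul_of_nonneg_left h hr0.le
    have h3 : r * (L / r - 1) = L - r := by field_simp
    nlinarith
  have hQmono : MonotoneOn Qs (Set.Icc 0 B) := by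
    intro a _ b _ hab
    by_cases haL : a ≤ L
    · rw [hQs a, if_pos haL]
      by_cases hbL : b ≤ L
      · rw [hQs b, if_pos hbL]
      · push_neg at hbL
        rw [hQφ b hbL]
        have := hφ1 b hbL
        nlinarith
    · push_neg at haL
      have hbL : L < b := lt_of_lt_of_le haL hab
      rw [hQφ a haL, hQφ b hbL]
      exact mul_le_mul_of_nonneg_left (hφmono haL hbL hab) hc0.le
  have hQB : Qs B = 1 := by
    rw [hQφ B hLB, hc, hφ]
    have hX : Real.log (B / L) = Real.log B - Real.log L := Real.log_div hB.ne' hL0.ne'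
    rw [hX] at hlog ⊢
    have hBL : B - L ≠ 0 := sub_ne_zero.2 (ne_of_gt hLB)
    field_simp
  have hQ0 : Qs 0 = c := by rw [hQs, if_pos hL0.le]
  have hmem : ∀ r ∈ Set.Icc (0 : ℝ) B, Qs r ∈ Set.Icc (0 : ℝ) 1 := by
    intro r hr
    have h0 : Qs 0 ≤ Qs r := hQmono ⟨le_refl 0, hB.le⟩ hr hr.1
    have h1 : Qs r ≤ Qs B := hQmono hr ⟨hB.le, le_refl B⟩ hr.2
    rw [hQ0] at h0
    rw [hQB] at h1
    exact ⟨le_trans hc0.le h0, h1⟩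
  -- limit of φ from the right at L
  have hφlim : Tendsto φ (𝓝[>] L) (𝓝 1) := by
    have hslope : Tendsto (fun r => (Real.log r - Real.log L) / (r - L)) (𝓝[≠] L) (𝓝 L⁻¹) := by
      have h := hasDerivAt_iff_tendsto_slope.1 (Real.hasDerivAt_log hL0.ne')
      exact h.congr fun r => by simp [slope_def_field]
    have h1 : Tendsto (fun r => (Real.log r - Real.log L) / (r - L)) (𝓝[>] L) (𝓝 L⁻¹) :=
      hslope.mono_left (nhdsWithin_mono L fun x hx => ne_of_gt hx)
    have h2 : Tendsto (fun r : ℝ => r) (𝓝[>] L) (𝓝 L) :=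
      tendsto_id.mono_left nhdsWithin_le_nhds
    have h3 := h2.mul h1
    rw [mul_inv_cancel₀ hL0.ne'] at h3
    exact h3.congr fun r => (mul_div_assoc _ _ _).symm
  have hQlim : Tendsto Qs (𝓝[>] L) (𝓝 c) := by
    have h : Tendsto (fun r => c * φ r) (𝓝[>] L) (𝓝 (c * 1)) :=
      tendsto_const_nhds.mul hφlim
    rw [mul_one] at h
    refine h.congr' ?_
    filter_upwards [self_mem_nhdsWithin] with r hr
    exact (hQφ r hr).symm
  have hQL : Qs L = c := by rw [hQs, if_pos le_rfl]
  refine ⟨hQmono, hmem, hQB, hQlim, hQL, ?_⟩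
  intro x hx
  rcases lt_trichotomy x L with hxL | rfl | hxL
  · have hmem' : Set.Iio L ∈ 𝓝[Set.Ioc 0 B] x :=
      mem_nhdsWithin_of_mem_nhds (Iio_mem_nhds hxL)
    refine ContinuousWithinAt.congr_of_eventuallyEq
      (continuousWithinAt_const : ContinuousWithinAt (fun _ => c) _ _) ?_ ?_
    · filter_upwards [hmem'] with r hr
      rw [hQs, if_pos hr.le]
    · rw [hQs, if_pos hxL.le]
  · unfold ContinuousWithinAt
    rw [hQL]
    have hsub : 𝓝[Set.Ioc 0 B] x ≤ 𝓝[Set.Iic x] x ⊔ 𝓝[Set.Ioi x] x := by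
      rw [← nhdsWithin_union]
      exact nhdsWithin_mono x fun y _ => le_or_gt y x
    refine Tendsto.mono_left ?_ hsub
    rw [tendsto_sup]
    constructor
    · refine tendsto_const_nhds.congr' ?_
      filter_upwards [self_mem_nhdsWithin] with r hr
      rw [hQs, if_pos (Set.mem_Iic.1 hr)]
    · exact hQlim
  · have hmem' : Set.Ioi L ∈ 𝓝 x := Ioi_mem_nhds hxL
    have hca : ContinuousAt (fun r => c * φ r) x :=
      continuousAt_const.mul (hφderiv x hxL).continuousAt
    refine (hca.congr ?_).continuousWithinAt
    filter_upwards [hmem'] with r hr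
    exact (hQφ r hr).symm
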